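/- For every integer m ≥ 1 and |q|<1: ∑_{j=1}^{∞} (-1)^j ((q;q)_{m+j-1} − (q;q)_j)/(q;q)_j = 1/2 + (q;q)_{m-1}/(-1;q)_m − (q;q)_{m-1}. -/

import Mathlib

set_option maxHeartbeats 1000000
set_option synthInstance.maxHeartbeats 400000

open Finset

/-- q-Pochhammer symbol (a;q)_n = ∏_{k=0}^{n-1} (1 - a q^k). -/
noncomputable def qP (a q : ℂ) (n : ℕ) : ℂ := ∏ k ∈ Finset.range n, (1 - a * q ^ k)

/-- Gaussian (q-)binomial coefficient [N choose n]_q. -/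
noncomputable def qBinom (q : ℂ) (N n : ℕ) : ℂ := qP q q N / (qP q q n * qP q q (N - n))

/-- shifted product ∏_{k=0}^{n-1}(1 - q^{i+k+1}) -/
noncomputable def cP (q : ℂ) (n i : ℕ) : ℂ := ∏ k ∈ Finset.range n, (1 - q ^ (i + k + 1))

lemma one_sub_ne (z : ℂ) (h : ‖z‖ < 1) : (1 : ℂ) - z ≠ 0 := by
  intro h0
  rw [sub_eq_zero] at h0
  rw [← h0] at h
  simp at h

lemma norm_q_pow_lt (q : ℂ) (hq : ‖q‖ < 1) (k : ℕ) (hk : k ≠ 0) : ‖q ^ k‖ < 1 := by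
  rw [norm_pow]; exact pow_lt_one₀ (norm_nonneg q) hq hk

lemma norm_q_pow_le (q : ℂ) (hq : ‖q‖ < 1) {a b : ℕ} (hab : a ≤ b) : ‖q‖ ^ b ≤ ‖q‖ ^ a :=
  pow_le_pow_of_le_one (norm_nonneg q) hq.le hab

lemma two_bound (q : ℂ) (hq : ‖q‖ < 1) (k : ℕ) (hk : k ≠ 0) : ‖(1:ℂ) - q ^ k‖ ≤ 2 := by
  calc ‖(1:ℂ) - q ^ k‖ ≤ ‖(1:ℂ)‖ + ‖q ^ k‖ := norm_sub_le _ _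
    _ ≤ 1 + 1 := by
        have := (norm_q_pow_lt q hq k hk).le
        rw [norm_one]
        linarith
    _ = 2 := by norm_num

lemma cP_norm_le (q : ℂ) (hq : ‖q‖ < 1) (n i : ℕ) : ‖cP q n i‖ ≤ 2 ^ n := by
  rw [cP]
  calc ‖∏ k ∈ Finset.range n, (1 - q ^ (i + k + 1))‖
      ≤ ∏ k ∈ Finset.range n, ‖(1 : ℂ) - q ^ (i + k + 1)‖ := norm_prod_le _ _
    _ ≤ ∏ _k ∈ Finset.range n, (2 : ℝ) := by
        apply Finset.prod_le_prod (fun k _ => norm_nonneg _)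
        intro k _
        exact two_bound q hq _ (Nat.succ_ne_zero _)
    _ = 2 ^ n := by simp

lemma summable_aux (q : ℂ) (hq : ‖q‖ < 1) (n : ℕ) (x : ℂ) (hx : ‖x‖ < 1) :
    Summable (fun i : ℕ => x ^ i * cP q n i) := by
  apply Summable.of_norm_bounded (g := fun i : ℕ => (2:ℝ) ^ n * ‖x‖ ^ i)
    ((summable_geometric_of_lt_one (norm_nonneg x) hx).mul_left _)
  intro i
  rw [norm_mul, norm_pow]
  have h := cP_norm_le q hq n i
  nlinarith [mul_nonneg (sub_nonneg.2 h) (pow_nonneg (norm_nonneg x) i),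
    pow_nonneg (norm_nonneg x) i, norm_nonneg (cP q n i)]

lemma cP_sub_one_norm (q : ℂ) (hq : ‖q‖ < 1) (n i : ℕ) : ‖cP q n i - 1‖ ≤ 3 ^ n * ‖q‖ ^ i := by
  induction n with
  | zero => simp [cP]
  | succ n ih =>
      have hsplit : cP q (n+1) i = cP q n i * (1 - q ^ (i + n + 1)) := by
        rw [cP, cP, Finset.prod_range_succ]
      have key : cP q (n+1) i - 1 = (cP q n i - 1) * (1 - q ^ (i + n + 1)) - q ^ (i + n + 1) := by
        rw [hsplit]; ring
      rw [key]
      have h2 : ‖(1:ℂ) - q ^ (i + n + 1)‖ ≤ 2 := two_bound q hq _ (Nat.succ_ne_zero _)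
      have h3 : ‖q ^ (i + n + 1)‖ ≤ ‖q‖ ^ i := by
        rw [norm_pow]; exact norm_q_pow_le q hq (Nat.le_add_right i (n+1))
      have hqi : (0:ℝ) ≤ ‖q‖ ^ i := by positivity
      have h1 : (1:ℝ) ≤ 3 ^ n := one_le_pow₀ (by norm_num)
      calc ‖(cP q n i - 1) * (1 - q ^ (i + n + 1)) - q ^ (i + n + 1)‖
          ≤ ‖(cP q n i - 1) * (1 - q ^ (i + n + 1))‖ + ‖q ^ (i + n + 1)‖ := norm_sub_le _ _
        _ = ‖cP q n i - 1‖ * ‖(1:ℂ) - q ^ (i + n + 1)‖ + ‖q ^ (i + n + 1)‖ := by rw [norm_mul]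
        _ ≤ (3 ^ n * ‖q‖ ^ i) * 2 + ‖q‖ ^ i := by
            have hm : ‖cP q n i - 1‖ * ‖(1:ℂ) - q ^ (i + n + 1)‖ ≤ (3 ^ n * ‖q‖ ^ i) * 2 := by
              nlinarith [norm_nonneg (cP q n i - 1), norm_nonneg ((1:ℂ) - q ^ (i + n + 1))]
            linarith
        _ ≤ 3 ^ (n+1) * ‖q‖ ^ i := by
            rw [pow_succ]
            nlinarith [mul_nonneg (sub_nonneg.2 h1) hqi]

lemma summable_t (q : ℂ) (hq : ‖q‖ < 1) (n : ℕ) :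
    Summable (fun j : ℕ => (-1:ℂ) ^ (j+1) * (cP q n (j+1) - 1)) := by
  apply Summable.of_norm_bounded (g := fun j : ℕ => (3:ℝ) ^ n * ‖q‖ ^ j)
    ((summable_geometric_of_lt_one (norm_nonneg q) hq).mul_left _)
  intro j
  rw [norm_mul]
  have h1 : ‖(-1:ℂ) ^ (j+1)‖ = 1 := by simp
  rw [h1, one_mul]
  calc ‖cP q n (j+1) - 1‖ ≤ 3 ^ n * ‖q‖ ^ (j+1) := cP_sub_one_norm q hq n (j+1)
    _ ≤ 3 ^ n * ‖q‖ ^ j := by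
        have hd : ‖q‖ ^ (j+1) ≤ ‖q‖ ^ j := norm_q_pow_le q hq (by omega)
        nlinarith [pow_nonneg (show (0:ℝ) ≤ 3 by norm_num) n]

/-- Key generating function identity:
  (∑' i, x^i (q^{i+1};q)_n) · ∏_{k=0}^{n}(1-xq^k) = (q;q)_n. -/
lemma GF (q : ℂ) (hq : ‖q‖ < 1) : ∀ (n : ℕ) (x : ℂ), ‖x‖ < 1 →
    (∑' i : ℕ, x ^ i * cP q n i) * ∏ k ∈ Finset.range (n+1), (1 - x * q ^ k) = cP q n 0 := by
  intro n
  induction n with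
  | zero =>
      intro x hx
      simp only [cP, Finset.range_zero, Finset.prod_empty, mul_one]
      rw [tsum_geometric_of_norm_lt_one hx]
      simp only [zero_add, Finset.prod_range_one, pow_zero, mul_one]
      exact inv_mul_cancel₀ (one_sub_ne x hx)
  | succ n ih =>
      intro x hx
      have hxq : ‖x * q‖ < 1 := by
        rw [norm_mul]
        nlinarith [norm_nonneg x, norm_nonneg q]
      -- the q-Pascal product identity
      have hc : ∀ i : ℕ, cP q (n+1) (i+1) = cP q (n+1) i + q^(i+1) * (1 - q^(n+1)) * cP q n (i+1) := by
        intro i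
        have e1 : cP q (n+1) (i+1) = cP q n (i+1) * (1 - q ^ (i + n + 2)) := by
          rw [cP, cP, Finset.prod_range_succ, show i + 1 + n + 1 = i + n + 2 from by omega]
        have e2 : cP q (n+1) i = cP q n (i+1) * (1 - q ^ (i+1)) := by
          rw [cP, cP, Finset.prod_range_succ']
          congr 1
          exact Finset.prod_congr rfl fun k _ => by
            rw [show i + (k+1) + 1 = i + 1 + k + 1 from by omega]
        rw [e1, e2]
        ring
      have hsum1 := summable_aux q hq (n+1) x hx
      have hsumG := summable_aux q hq n (x*q) hxq
      have hshiftsum : Summable (fun i : ℕ => (x*q) ^ (i+1) * cP q n (i+1)) :=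
        (summable_nat_add_iff 1).2 hsumG
      have hzero : (∑' i : ℕ, x ^ i * cP q (n+1) i)
          = cP q (n+1) 0 + ∑' i : ℕ, x ^ (i+1) * cP q (n+1) (i+1) := by
        rw [Summable.tsum_eq_zero_add hsum1]
        norm_num
      have hGshift : (∑' i : ℕ, (x*q) ^ (i+1) * cP q n (i+1))
          = (∑' i : ℕ, (x*q) ^ i * cP q n i) - cP q n 0 := by
        have h := Summable.tsum_eq_zero_add hsumG
        simp only [pow_zero, one_mul] at h
        rw [h]
        ring
      have hpoint : ∀ i : ℕ, x ^ (i+1) * cP q (n+1) (i+1)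
          = x * (x ^ i * cP q (n+1) i) + (1 - q^(n+1)) * ((x*q) ^ (i+1) * cP q n (i+1)) := by
        intro i
        rw [hc i]
        ring
      have hsplit2 : (∑' i : ℕ, x ^ (i+1) * cP q (n+1) (i+1))
          = x * (∑' i : ℕ, x ^ i * cP q (n+1) i)
            + (1 - q^(n+1)) * ((∑' i : ℕ, (x*q) ^ i * cP q n i) - cP q n 0) := by
        rw [tsum_congr hpoint,
          Summable.tsum_add (hsum1.mul_left x) (hshiftsum.mul_left _),
          tsum_mul_left, tsum_mul_left, hGshift]
      have hc0 : cP q (n+1) 0 = cP q n 0 * (1 - q^(n+1)) := by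
        rw [cP, cP, Finset.prod_range_succ, show 0 + n + 1 = n + 1 from by omega]
      have hfe : (1 - x) * (∑' i : ℕ, x ^ i * cP q (n+1) i)
          = (1 - q^(n+1)) * (∑' i : ℕ, (x*q) ^ i * cP q n i) := by
        have h := hzero
        rw [hsplit2, hc0] at h
        linear_combination h
      have hprodsplit : ∏ k ∈ Finset.range (n+1+1), (1 - x * q ^ k)
          = (1 - x) * ∏ k ∈ Finset.range (n+1), (1 - x * q * q ^ k) := by
        rw [Finset.prod_range_succ', mul_comm]
        congr 1
        · simp
        · exact Finset.prod_congr rfl fun k _ => by ring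
      rw [hprodsplit, ← mul_assoc, mul_comm (∑' i : ℕ, x ^ i * cP q (n+1) i) (1-x), hfe,
        mul_assoc, ih (x*q) hxq, hc0]
      ring

lemma qPneg_ne_zero (q : ℂ) (hq : ‖q‖ < 1) (n : ℕ) : qP (-1) q n ≠ 0 := by
  rw [qP]
  apply Finset.prod_ne_zero_iff.2
  intro k _
  match k with
  | 0 => norm_num
  | (k+1) =>
      have h : (1:ℂ) - (-1) * q ^ (k+1) = 1 - (-(q^(k+1))) := by ring
      rw [h]
      apply one_sub_ne
      rw [norm_neg]
      exact norm_q_pow_lt q hq (k+1) (Nat.succ_ne_zero k)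

lemma qPq_ne_zero (q : ℂ) (hq : ‖q‖ < 1) (n : ℕ) : qP q q n ≠ 0 := by
  rw [qP]
  apply Finset.prod_ne_zero_iff.2
  intro k _
  have h : (1:ℂ) - q * q ^ k = 1 - q ^ (k+1) := by ring
  rw [h]
  exact one_sub_ne _ (norm_q_pow_lt q hq (k+1) (Nat.succ_ne_zero k))

lemma aux_main (q : ℂ) (hq : ‖q‖ < 1) : ∀ n : ℕ,
    ∑' j : ℕ, (-1:ℂ) ^ (j+1) * (cP q n (j+1) - 1)
      = 1/2 + cP q n 0 / qP (-1) q (n+1) - cP q n 0 := by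
  intro n
  induction n with
  | zero =>
      have h0 : ∀ j : ℕ, (-1:ℂ) ^ (j+1) * (cP q 0 (j+1) - 1) = 0 := by
        intro j; simp [cP]
      rw [tsum_congr h0, tsum_zero]
      have h1 : qP (-1) q 1 = 2 := by
        rw [qP]
        simp [Finset.prod_range_one]
        norm_num
      rw [h1]
      simp [cP]
      norm_num
  | succ n ih =>
      have hnq : ‖-q‖ < 1 := by rwa [norm_neg]
      have hc : ∀ j : ℕ, cP q (n+1) (j+1) = cP q n (j+1) * (1 - q ^ (j + n + 2)) := by
        intro j
        rw [cP, cP, Finset.prod_range_succ, show j + 1 + n + 1 = j + n + 2 from by omega]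
      have hpoint : ∀ j : ℕ, (-1:ℂ) ^ (j+1) * (cP q (n+1) (j+1) - 1)
          = (-1:ℂ) ^ (j+1) * (cP q n (j+1) - 1)
            + (-(q^(n+1))) * ((-q) ^ (j+1) * cP q n (j+1)) := by
        intro j
        rw [hc j]
        ring
      have hsumT := summable_t q hq n
      have hsumG := summable_aux q hq n (-q) hnq
      have hsumD : Summable (fun j : ℕ => (-q) ^ (j+1) * cP q n (j+1)) :=
        (summable_nat_add_iff 1).2 hsumG
      have hshift : (∑' j : ℕ, (-q) ^ (j+1) * cP q n (j+1))
          = (∑' i : ℕ, (-q) ^ i * cP q n i) - cP q n 0 := by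
        have h := Summable.tsum_eq_zero_add hsumG
        simp only [pow_zero, one_mul] at h
        rw [h]
        ring
      have hQ'ne : (∏ k ∈ Finset.range (n+1), (1 - -q * q ^ k)) ≠ 0 := by
        apply Finset.prod_ne_zero_iff.2
        intro k _
        have h : (1:ℂ) - -q * q ^ k = 1 - (-(q^(k+1))) := by ring
        rw [h]
        apply one_sub_ne
        rw [norm_neg]
        exact norm_q_pow_lt q hq (k+1) (Nat.succ_ne_zero k)
      have hne1 : qP (-1) q (n+1) ≠ 0 := qPneg_ne_zero q hq (n+1)
      have h1q : (1:ℂ) - (-1) * q^(n+1) ≠ 0 := by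
        have h : (1:ℂ) - (-1) * q ^ (n+1) = 1 - (-(q^(n+1))) := by ring
        rw [h]
        apply one_sub_ne
        rw [norm_neg]
        exact norm_q_pow_lt q hq (n+1) (Nat.succ_ne_zero n)
      have hqP2 : qP (-1) q (n+2) = qP (-1) q (n+1) * (1 - (-1) * q^(n+1)) := by
        rw [qP, qP, Finset.prod_range_succ]
      have hqPQ : qP (-1) q (n+2) = 2 * ∏ k ∈ Finset.range (n+1), (1 - -q * q ^ k) := by
        rw [qP, Finset.prod_range_succ']
        have e1 : ∀ k ∈ Finset.range (n+1), (1:ℂ) - (-1) * q ^ (k+1) = 1 - -q * q ^ k := by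
          intro k _; ring
        rw [Finset.prod_congr rfl e1, pow_zero]
        ring
      have hbc : qP (-1) q (n+1) * (1 - (-1) * q^(n+1))
          = 2 * ∏ k ∈ Finset.range (n+1), (1 - -q * q ^ k) := hqP2.symm.trans hqPQ
      have hGval2 : (∑' i : ℕ, (-q) ^ i * cP q n i)
          = 2 * cP q n 0 / (qP (-1) q (n+1) * (1 - (-1) * q^(n+1))) := by
        rw [eq_div_iff (mul_ne_zero hne1 h1q), hbc]
        linear_combination 2 * GF q hq n (-q) hnq
      have hc0 : cP q (n+1) 0 = cP q n 0 * (1 - q^(n+1)) := by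
        rw [cP, cP, Finset.prod_range_succ, show 0 + n + 1 = n + 1 from by omega]
      rw [tsum_congr hpoint,
        Summable.tsum_add hsumT (hsumD.mul_left _), ih, tsum_mul_left, hshift, hGval2,
        hc0, hqP2]
      rw [show (1:ℂ) - -1 * q^(n+1) = 1 + q^(n+1) from by ring]
      have h1q' : (1:ℂ) + q^(n+1) ≠ 0 := by
        intro h
        exact h1q (by linear_combination h)
      field_simp [hne1, h1q']
      ring

theorem stmt_12 (m : ℕ) (hm : 1 ≤ m) (q : ℂ) (hq : ‖q‖ < 1) :
    ∑' j : ℕ, (-1 : ℂ) ^ (j + 1) * (qP q q (m + j) - qP q q (j + 1)) / qP q q (j + 1) =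
      1 / 2 + qP q q (m - 1) / qP (-1) q m - qP q q (m - 1) := by
  obtain ⟨n, rfl⟩ : ∃ n, m = n + 1 := ⟨m - 1, by omega⟩
  have hconv : ∀ j : ℕ, (-1 : ℂ) ^ (j + 1) * (qP q q (n + 1 + j) - qP q q (j + 1)) / qP q q (j + 1)
      = (-1:ℂ) ^ (j+1) * (cP q n (j+1) - 1) := by
    intro j
    have hsplit : qP q q (n + 1 + j) = qP q q (j+1) * cP q n (j+1) := by
      rw [show n + 1 + j = (j+1) + n from by omega]
      simp only [qP, cP]
      rw [Finset.prod_range_add]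
      congr 1
      exact Finset.prod_congr rfl fun k _ => by
        rw [show j + 1 + k + 1 = (j + 1 + k) + 1 from rfl]
        ring
    rw [hsplit]
    have hne := qPq_ne_zero q hq (j+1)
    field_simp
  rw [tsum_congr hconv, aux_main q hq n, show n + 1 - 1 = n from by omega]
  have hP : qP q q n = cP q n 0 := by
    simp only [qP, cP]
    exact Finset.prod_congr rfl fun k _ => by
      rw [show 0 + k + 1 = k + 1 from by omega]
      ring
  rw [hP]
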